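/- Let C be a triangulated category, X --f--> Y --g--> Z --> X[1] a distinguished triangle, and h : Z' → Z any morphism. If f is irreducible (i.e. f is neither a split monomorphism nor a split epimorphism, and in any factorization f = f₂ ∘ f₁, either f₁ is a split monomorphism or f₂ is a split epimorphism), then either h factors through g (there exists t : Z' → Y with h = g ∘ t) or g factors through h (there exists s : Y → Z' with g = h ∘ s). -/

import Mathlib

open CategoryTheory Limits Pretriangulated

/-- A morphism is irreducible if it is neither a split monomorphism nor a split
epimorphism, and in any factorization `f = f₁ ≫ f₂`, either `f₁` is a split
monomorphism or `f₂` is a split epimorphism. -/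
def IsIrreducibleHom {C : Type*} [Category C] {X Y : C} (f : X ⟶ Y) : Prop :=
  ¬ IsSplitMono f ∧ ¬ IsSplitEpi f ∧
    ∀ ⦃W : C⦄ (f₁ : X ⟶ W) (f₂ : W ⟶ Y), f = f₁ ≫ f₂ → IsSplitMono f₁ ∨ IsSplitEpi f₂

/-- Given a distinguished triangle `X --f--> Y --g--> Z → X⟦1⟧` with `f`
irreducible and any morphism `h : Z' ⟶ Z`, either `h` factors through `g` or `g`
factors through `h`. -/
theorem stmt2 {C : Type*} [Category C] [Preadditive C] [HasZeroObject C]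
    [HasShift C ℤ] [∀ n : ℤ, (CategoryTheory.shiftFunctor C n).Additive]
    [Pretriangulated C]
    (X Y Z Z' : C) (f : X ⟶ Y) (g : Y ⟶ Z) (w : Z ⟶ X⟦(1 : ℤ)⟧)
    (hT : Triangle.mk f g w ∈ distinguishedTriangles (C := C))
    (hf : IsIrreducibleHom f) (h : Z' ⟶ Z) :
    (∃ t : Z' ⟶ Y, h = t ≫ g) ∨ (∃ s : Y ⟶ Z', g = s ≫ h) := by
  obtain ⟨E, a, b, hT'⟩ := distinguished_cocone_triangle₂ (h ≫ w)
  obtain ⟨φ, hφ₁, hφ₂⟩ : ∃ φ : E ⟶ Y, a ≫ φ = 𝟙 X ≫ f ∧ b ≫ h = φ ≫ g :=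
    complete_distinguished_triangle_morphism₂
    (Triangle.mk a b (h ≫ w)) (Triangle.mk f g w) hT' hT (𝟙 X) h (by change (h ≫ w) ≫ (𝟙 X)⟦(1 : ℤ)⟧' = h ≫ w; simp)
  change a ≫ φ = 𝟙 X ≫ f at hφ₁
  change b ≫ h = φ ≫ g at hφ₂
  rw [Category.id_comp] at hφ₁
  rcases hf.2.2 a φ hφ₁.symm with hsm | hse
  · -- `a` split mono ⇒ `h ≫ w = 0` ⇒ `b` has a section
    have hw0 : h ≫ w = 0 := by
      have := comp_distTriang_mor_zero₃₁ _ hT'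
      change (h ≫ w) ≫ a⟦(1 : ℤ)⟧' = 0 at this
      rw [← cancel_mono (a⟦(1 : ℤ)⟧')]
      simpa using this
    obtain ⟨c, hc⟩ : ∃ c : Z' ⟶ E, 𝟙 Z' = c ≫ b := Pretriangulated.Triangle.coyoneda_exact₃ _ hT' (𝟙 Z')
      (by change 𝟙 Z' ≫ (h ≫ w) = 0; rw [hw0, comp_zero])
    change 𝟙 Z' = c ≫ b at hc
    refine Or.inl ⟨c ≫ φ, ?_⟩
    rw [Category.assoc, ← hφ₂, ← Category.assoc, ← hc, Category.id_comp]
  · -- `φ` split epi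
    refine Or.inr ⟨section_ φ ≫ b, ?_⟩
    rw [Category.assoc, hφ₂, ← Category.assoc, IsSplitEpi.id, Category.id_comp]
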